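/- Define the tetration of a real base b > 1 by T(b, 0) = 1 and T(b, k+1) = b^{T(b, k)}. Then for every natural number i, T(2, i+1) ≤ 2 · T(1.98, i+2). Equivalently, setting d_{i+1} = d / T(2, i+1) and ε = 16 · T(1.98, i+2) / T(2, i+1) for any real d > 0, one has (2 + ε) · d / (20 · T(1.98, i+2)) ≤ d / T(2, i+1). -/
import Mathlib


/-- Tetration with real base `b`: `tetr b k` is a tower of `k` copies of `b`, with
`tetr b 0 = 1` and `tetr b (k+1) = b ^ (tetr b k)` (real exponentiation). -/
noncomputable def tetr (b : ℝ) : ℕ → ℝ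
  | 0 => 1
  | k + 1 => b ^ tetr b k

lemma tetr_one_le {b : ℝ} (hb : 1 ≤ b) : ∀ k, 1 ≤ tetr b k
  | 0 => le_refl 1
  | k + 1 => by
    show (1:ℝ) ≤ b ^ tetr b k
    calc (1:ℝ) = b ^ (0:ℝ) := (Real.rpow_zero b).symm
    _ ≤ b ^ tetr b k := Real.rpow_le_rpow_of_exponent_le hb
        (le_trans zero_le_one (tetr_one_le hb k))

-- numeric fact: 2.76 ≤ 1.98 ^ 1.9
lemma numC : (2.76 : ℝ) ≤ (1.98 : ℝ) ^ (1.9 : ℝ) := by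
  have h0 : (0:ℝ) ≤ (1.98:ℝ) ^ (1.9:ℝ) := Real.rpow_nonneg (by norm_num) _
  refine le_of_pow_le_pow_left₀ (n := 10) (by norm_num) h0 ?_
  have h1 : ((1.98:ℝ) ^ (1.9:ℝ)) ^ (10:ℕ) = (1.98:ℝ) ^ (19:ℕ) := by
    rw [← Real.rpow_natCast ((1.98:ℝ) ^ (1.9:ℝ)) 10, ← Real.rpow_mul (by norm_num),
      show (1.9:ℝ) * (10:ℕ) = ((19:ℕ):ℝ) by norm_num, Real.rpow_natCast]
  rw [h1]
  norm_num

-- generic step: for a ≥ 2, 1.9 * 2^a ≤ 1.98^(1.9*a)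
lemma stepB {a : ℝ} (ha : 2 ≤ a) : 1.9 * (2:ℝ) ^ a ≤ (1.98:ℝ) ^ ((1.9:ℝ) * a) := by
  have ha0 : (0:ℝ) ≤ a := by linarith
  have h1 : (1.98:ℝ) ^ ((1.9:ℝ) * a) = ((1.98:ℝ) ^ (1.9:ℝ)) ^ a :=
    Real.rpow_mul (by norm_num) _ _
  have h2 : ((2.76:ℝ)) ^ a ≤ ((1.98:ℝ) ^ (1.9:ℝ)) ^ a :=
    Real.rpow_le_rpow (by norm_num) numC ha0
  have h3 : ((2.76:ℝ)) ^ a = (1.38:ℝ) ^ a * (2:ℝ) ^ a := by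
    rw [← Real.mul_rpow (by norm_num) (by norm_num)]
    norm_num
  have h4 : (1.9:ℝ) ≤ (1.38:ℝ) ^ a := by
    calc (1.9:ℝ) ≤ (1.38:ℝ) ^ (2:ℝ) := by
          rw [show (2:ℝ) = ((2:ℕ):ℝ) by norm_num, Real.rpow_natCast]; norm_num
      _ ≤ (1.38:ℝ) ^ a := Real.rpow_le_rpow_of_exponent_le (by norm_num) ha
  have h5 : (0:ℝ) < (2:ℝ) ^ a := Real.rpow_pos_of_pos (by norm_num) a
  calc 1.9 * (2:ℝ) ^ a ≤ (1.38:ℝ) ^ a * (2:ℝ) ^ a := by nlinarith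
    _ = (2.76:ℝ) ^ a := h3.symm
    _ ≤ ((1.98:ℝ) ^ (1.9:ℝ)) ^ a := h2
    _ = (1.98:ℝ) ^ ((1.9:ℝ) * a) := h1.symm

lemma tetr2_ge_two (k : ℕ) : (2:ℝ) ≤ tetr 2 (k + 1) := by
  show (2:ℝ) ≤ (2:ℝ) ^ tetr 2 k
  calc (2:ℝ) = (2:ℝ) ^ (1:ℝ) := (Real.rpow_one 2).symm
    _ ≤ (2:ℝ) ^ tetr 2 k := Real.rpow_le_rpow_of_exponent_le (by norm_num)
        (tetr_one_le (by norm_num) k)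

lemma key : ∀ k, 1.9 * tetr 2 k ≤ tetr 1.98 (k + 1)
  | 0 => by
    show (1.9:ℝ) * 1 ≤ (1.98:ℝ) ^ tetr 1.98 0
    show (1.9:ℝ) * 1 ≤ (1.98:ℝ) ^ (1:ℝ)
    rw [Real.rpow_one]; norm_num
  | 1 => by
    show (1.9:ℝ) * ((2:ℝ) ^ tetr 2 0) ≤ (1.98:ℝ) ^ tetr 1.98 1
    show (1.9:ℝ) * ((2:ℝ) ^ (1:ℝ)) ≤ (1.98:ℝ) ^ ((1.98:ℝ) ^ (1:ℝ))
    rw [Real.rpow_one, Real.rpow_one]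
    -- goal: 3.8 ≤ 1.98 ^ (1.98:ℝ)
    have h0 : (0:ℝ) ≤ (1.98:ℝ) ^ (1.98:ℝ) := Real.rpow_nonneg (by norm_num) _
    have : (3.8:ℝ) ≤ (1.98:ℝ) ^ (1.98:ℝ) := by
      refine le_of_pow_le_pow_left₀ (n := 50) (by norm_num) h0 ?_
      have h1 : ((1.98:ℝ) ^ (1.98:ℝ)) ^ (50:ℕ) = (1.98:ℝ) ^ (99:ℕ) := by
        rw [← Real.rpow_natCast ((1.98:ℝ) ^ (1.98:ℝ)) 50, ← Real.rpow_mul (by norm_num),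
          show (1.98:ℝ) * (50:ℕ) = ((99:ℕ):ℝ) by norm_num, Real.rpow_natCast]
      rw [h1]
      norm_num
    linarith
  | (k + 2) => by
    have ih := key (k + 1)
    have ha := tetr2_ge_two k
    show (1.9:ℝ) * ((2:ℝ) ^ tetr 2 (k+1)) ≤ (1.98:ℝ) ^ tetr 1.98 (k+2)
    calc (1.9:ℝ) * ((2:ℝ) ^ tetr 2 (k+1)) ≤ (1.98:ℝ) ^ ((1.9:ℝ) * tetr 2 (k+1)) :=
          stepB ha
      _ ≤ (1.98:ℝ) ^ tetr 1.98 (k+2) :=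
          Real.rpow_le_rpow_of_exponent_le (by norm_num) ih

/-- For every `i`, `T(2, i+1) ≤ 2 * T(1.98, i+2)`; equivalently, with
`ε = 16 * T(1.98, i+2) / T(2, i+1)`, for every `d > 0` one has
`(2 + ε) * d / (20 * T(1.98, i+2)) ≤ d / T(2, i+1)`. -/
theorem stmt14 (i : ℕ) :
    tetr 2 (i + 1) ≤ 2 * tetr 1.98 (i + 2) ∧
    ∀ d : ℝ, 0 < d →
      (2 + 16 * tetr 1.98 (i + 2) / tetr 2 (i + 1)) * d / (20 * tetr 1.98 (i + 2)) ≤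
        d / tetr 2 (i + 1) := by
  have hk := key (i + 1)
  have ha : (0:ℝ) < tetr 2 (i + 1) := lt_of_lt_of_le one_pos (tetr_one_le (by norm_num) _)
  have hb : (0:ℝ) < tetr 1.98 (i + 2) := lt_of_lt_of_le one_pos (tetr_one_le (by norm_num) _)
  have hab : tetr 2 (i + 1) ≤ 2 * tetr 1.98 (i + 2) := by nlinarith
  refine ⟨hab, fun d hd => ?_⟩
  rw [div_le_div_iff₀ (by positivity) ha]
  have h16 : 16 * tetr 1.98 (i + 2) / tetr 2 (i + 1) * tetr 2 (i + 1)
      = 16 * tetr 1.98 (i + 2) := div_mul_cancel₀ _ (ne_of_gt ha)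
  nlinarith [mul_pos hd hb, mul_pos hd ha]
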